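/- arXiv:2303.10520 — 3 statements merged into one kernel-verified Lean document; each statement's English description precedes it below -/
import Mathlib

section
/- Let φ : X × Y → ℝ ∪ {±∞} be a proper generalized polyhedral convex function and F : X ⇒ Y a generalized polyhedral convex multifunction. Define μ(x) = inf{φ(x,y) : y ∈ F(x)} (with inf ∅ = +∞). For any x ∈ X, if μ(x) is finite, then the set M(x) = {y ∈ F(x) : φ(x,y) = μ(x)} is nonempty, i.e., the infimum is attained. -/
open Set Submodule Module

universe u

/-- Auxiliary statement: a linear functional bounded below on a nonempty set
defined by finitely many linear inequalities attains its minimum there,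
where the span of the constraint functionals has rank at most `m`. -/
def LPMin (m : ℕ) : Prop :=
  ∀ (E : Type u) [AddCommGroup E] [Module ℝ E] (ι : Type) [Fintype ι]
    (f : ι → E →ₗ[ℝ] ℝ) (c : ι → ℝ) (ℓ : E →ₗ[ℝ] ℝ),
    Module.finrank ℝ (Submodule.span ℝ (Set.range f)) ≤ m →
    ∀ x0 : E, (∀ i, f i x0 ≤ c i) →
    ∀ b : ℝ, (∀ x : E, (∀ i, f i x ≤ c i) → b ≤ ℓ x) →
    ∃ z : E, (∀ i, f i z ≤ c i) ∧ ∀ x : E, (∀ i, f i x ≤ c i) → ℓ z ≤ ℓ x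

set_option maxHeartbeats 1000000 in
theorem lpmin (m : ℕ) : LPMin.{u} m := by
  induction m using Nat.strong_induction_on with
  | _ m ih =>
  intro E _ _ ι _ f c ℓ hrank x0 hx0 b hb
  classical
  by_cases hl : ℓ = 0
  · exact ⟨x0, hx0, fun x hx => by simp [hl]⟩
  by_cases hA : ∀ i, ∀ w : E, ℓ w = 0 → f i w = 0
  · -- Case A : all constraints are multiples of ℓ
    obtain ⟨w, hw⟩ : ∃ w, ℓ w ≠ 0 := by
      by_contra h; push_neg at h; exact hl (LinearMap.ext fun z => by simp [h z])
    obtain ⟨u, hu1⟩ : ∃ u : E, ℓ u = 1 :=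
      ⟨(ℓ w)⁻¹ • w, by simp [inv_mul_cancel₀ hw]⟩
    have hkey : ∀ i (x : E), f i x = f i u * ℓ x := by
      intro i x
      have h0 : ℓ (x - ℓ x • u) = 0 := by simp [map_sub, map_smul, hu1]
      have h1 := hA i _ h0
      simp only [map_sub, map_smul, smul_eq_mul] at h1
      linarith
    have hfeasT : ∀ t : ℝ, (∀ i, f i u * t ≤ c i) → ∀ i, f i (t • u) ≤ c i := by
      intro t ht i
      simp only [map_smul, smul_eq_mul]
      calc t * f i u = f i u * t := mul_comm _ _
        _ ≤ c i := ht i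
    have hlval : ∀ t : ℝ, ℓ (t • u) = t := by
      intro t; simp only [map_smul, smul_eq_mul, hu1, mul_one]
    set T : Set ℝ := {t : ℝ | ∀ i, f i u * t ≤ c i} with hT
    have hTcl : IsClosed T := by
      have : T = ⋂ i, {t : ℝ | f i u * t ≤ c i} := by ext t; simp [hT, Set.mem_iInter]
      rw [this]
      exact isClosed_iInter fun i =>
        isClosed_le (continuous_const.mul continuous_id) continuous_const
    have hTne : T.Nonempty := ⟨ℓ x0, fun i => by rw [← hkey]; exact hx0 i⟩
    have hTbdd : BddBelow T := by
      refine ⟨b, fun t ht => ?_⟩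
      have := hb (t • u) (hfeasT t ht)
      rwa [hlval] at this
    have hmem := hTcl.csInf_mem hTne hTbdd
    refine ⟨sInf T • u, hfeasT _ hmem, fun x hx => ?_⟩
    have hxT : ℓ x ∈ T := fun i => by rw [← hkey]; exact hx i
    rw [hlval]
    exact csInf_le hTbdd hxT
  · -- Case B : eliminate one direction
    push_neg at hA
    obtain ⟨j, v0, hv0l, hv0f⟩ := hA
    obtain ⟨v, hjv, hlv⟩ : ∃ v : E, f j v = 1 ∧ ℓ v = 0 :=
      ⟨(f j v0)⁻¹ • v0, by simp [inv_mul_cancel₀ hv0f], by simp [hv0l]⟩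
    set a : ι → ℝ := fun i => f i v with ha
    set E₀ : Submodule ℝ E := LinearMap.ker (f j) with hE₀
    set R : (E →ₗ[ℝ] ℝ) → (↥E₀ →ₗ[ℝ] ℝ) := fun h => h.comp E₀.subtype with hR
    set g : (ι ⊕ ι × ι) → (↥E₀ →ₗ[ℝ] ℝ) :=
      Sum.elim (fun i => if a i = 0 then R (f i) else 0)
        (fun p => if 0 < a p.1 ∧ a p.2 < 0
          then a p.1 • R (f p.2) - a p.2 • R (f p.1) else 0) with hg
    set d : (ι ⊕ ι × ι) → ℝ :=
      Sum.elim (fun i => if a i = 0 then c i else 0)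
        (fun p => if 0 < a p.1 ∧ a p.2 < 0
          then a p.1 * c p.2 - a p.2 * c p.1 else 0) with hd
    have hexp : ∀ (h : E →ₗ[ℝ] ℝ) (y : ↥E₀) (s : ℝ),
        h (↑y + s • v) = h ↑y + s * h v := by
      intro h y s; rw [map_add, map_smul, smul_eq_mul]
    -- the key Fourier–Motzkin equivalence
    have hiff : ∀ y : ↥E₀, (∀ k, g k y ≤ d k) ↔
        ∃ s : ℝ, ∀ i, f i (↑y + s • v) ≤ c i := by
      intro y
      constructor
      · intro hgy
        have hzero : ∀ i, a i = 0 → f i ↑y ≤ c i := by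
          intro i h0
          have h := hgy (Sum.inl i)
          simpa [hg, hd, h0, hR] using h
        have hpair : ∀ i i', 0 < a i → a i' < 0 →
            a i * f i' ↑y - a i' * f i ↑y ≤ a i * c i' - a i' * c i := by
          intro i i' hi hi'
          have h := hgy (Sum.inr (i, i'))
          simp only [hg, hd, Sum.elim_inr] at h
          rw [if_pos ⟨hi, hi'⟩, if_pos ⟨hi, hi'⟩] at h
          simpa [hR] using h
        set q : ι → ℝ := fun i => (c i - f i ↑y) / a i with hq
        set M : Finset ι := Finset.univ.filter (fun i => a i < 0) with hM
        set P : Finset ι := Finset.univ.filter (fun i => 0 < a i) with hP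
        have hend : ∀ s : ℝ, (∀ i, f i ↑y + s * a i ≤ c i) →
            ∀ i, f i (↑y + s • v) ≤ c i := by
          intro s hs i; rw [hexp]; exact hs i
        by_cases hMne : M.Nonempty
        · refine ⟨M.sup' hMne q, hend _ fun i => ?_⟩
          rcases lt_trichotomy (a i) 0 with hai | hai | hai
          · have hle : q i ≤ M.sup' hMne q :=
              Finset.le_sup' q (by simp [hM, hai])
            have h2 : M.sup' hMne q * a i ≤ q i * a i :=
              mul_le_mul_of_nonpos_right hle (le_of_lt hai)
            have h3 : q i * a i = c i - f i ↑y := div_mul_cancel₀ _ (ne_of_lt hai)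
            linarith
          · have := hzero i hai; rw [hai]; linarith
          · obtain ⟨i', hi'M, hi'eq⟩ := Finset.exists_mem_eq_sup' hMne q
            have hai' : a i' < 0 := by
              rw [hM, Finset.mem_filter] at hi'M; exact hi'M.2
            have hpij := hpair i i' hai hai'
            have e1 : q i' * a i' = c i' - f i' ↑y := div_mul_cancel₀ _ (ne_of_lt hai')
            have e2 : q i * a i = c i - f i ↑y := div_mul_cancel₀ _ (ne_of_gt hai)
            have hqle : q i' ≤ q i := by
              nlinarith [mul_pos hai (neg_pos.2 hai')]
            have h2 : M.sup' hMne q * a i ≤ q i * a i := by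
              refine mul_le_mul_of_nonneg_right ?_ (le_of_lt hai)
              rw [hi'eq]; exact hqle
            linarith
        · by_cases hPne : P.Nonempty
          · refine ⟨P.inf' hPne q, hend _ fun i => ?_⟩
            rcases lt_trichotomy (a i) 0 with hai | hai | hai
            · exact absurd ⟨i, by simp [hM, hai]⟩ hMne
            · have := hzero i hai; rw [hai]; linarith
            · have hle : P.inf' hPne q ≤ q i :=
                Finset.inf'_le q (by simp [hP, hai])
              have h2 : P.inf' hPne q * a i ≤ q i * a i :=
                mul_le_mul_of_nonneg_right hle (le_of_lt hai)
              have h3 : q i * a i = c i - f i ↑y := div_mul_cancel₀ _ (ne_of_gt hai)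
              linarith
          · refine ⟨0, hend _ fun i => ?_⟩
            rcases lt_trichotomy (a i) 0 with hai | hai | hai
            · exact absurd ⟨i, by simp [hM, hai]⟩ hMne
            · have := hzero i hai; linarith
            · exact absurd ⟨i, by simp [hP, hai]⟩ hPne
      · rintro ⟨s, hs⟩ k
        have hs' : ∀ i, f i ↑y + s * a i ≤ c i := fun i => by
          have h := hs i; rwa [hexp] at h
        rcases k with i | ⟨i, i'⟩
        · by_cases hai : a i = 0
          · have h := hs' i; rw [hai, mul_zero, add_zero] at h
            simpa [hg, hd, hai, hR] using h
          · simp [hg, hd, hai]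
        · by_cases hcond : 0 < a i ∧ a i' < 0
          · have h1 := hs' i
            have h2 := hs' i'
            have hRi : R (f i) y = f i ↑y := rfl
            have hRi' : R (f i') y = f i' ↑y := rfl
            simp only [hg, hd, Sum.elim_inr]
            rw [if_pos hcond, if_pos hcond]
            simp only [LinearMap.sub_apply, LinearMap.smul_apply, smul_eq_mul, hRi, hRi']
            nlinarith [hcond.1, hcond.2, h1, h2]
          · simp [hg, hd, hcond]
    -- correspondence: from E-feasible points to E₀-feasible points
    have hfwd : ∀ x : E, (∀ i, f i x ≤ c i) →
        ∃ y : ↥E₀, (∀ k, g k y ≤ d k) ∧ ℓ ↑y = ℓ x := by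
      intro x hx
      have hmem : x - f j x • v ∈ E₀ := by
        rw [hE₀, LinearMap.mem_ker, map_sub, map_smul, smul_eq_mul, hjv]; ring
      refine ⟨⟨x - f j x • v, hmem⟩, ?_, ?_⟩
      · apply (hiff _).mpr
        refine ⟨f j x, fun i => ?_⟩
        have heq : ((⟨x - f j x • v, hmem⟩ : ↥E₀) : E) + f j x • v = x := by
          simp
        rw [heq]; exact hx i
      · simp only [map_sub, map_smul, smul_eq_mul, hlv, mul_zero, sub_zero]
    -- rank decrease
    set W : Submodule ℝ (E →ₗ[ℝ] ℝ) := Submodule.span ℝ (Set.range f) with hW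
    haveI : FiniteDimensional ℝ ↥W := FiniteDimensional.span_of_finite ℝ (Set.finite_range f)
    set Q : ↥W →ₗ[ℝ] (↥E₀ →ₗ[ℝ] ℝ) :=
      (LinearMap.lcomp ℝ ℝ E₀.subtype).domRestrict W with hQ
    have hQapp : ∀ h : ↥W, Q h = R (h : E →ₗ[ℝ] ℝ) := fun h => rfl
    have hfj : f j ∈ W := Submodule.subset_span (Set.mem_range_self j)
    have hfjne : f j ≠ 0 := fun h => by simp [h] at hjv
    have hQfj : Q ⟨f j, hfj⟩ = 0 := by
      apply LinearMap.ext; intro z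
      have hz : f j (z : E) = 0 := z.2
      simpa [hQapp, hR] using hz
    have hkerpos : 0 < finrank ℝ ↥(LinearMap.ker Q) := by
      letI : AddCommGroup ↥(LinearMap.ker Q) := @Submodule.addCommGroup ℝ ↥W _ _ _ (LinearMap.ker Q)
      haveI : FiniteDimensional ℝ ↥(LinearMap.ker Q) :=
        @FiniteDimensional.finiteDimensional_submodule ℝ ↥W _ _ _ _ (LinearMap.ker Q)
      refine (finrank_pos_iff_exists_ne_zero (R := ℝ) (M := ↥(LinearMap.ker Q))).mpr ?_
      refine ⟨⟨⟨f j, hfj⟩, LinearMap.mem_ker.mpr hQfj⟩, ?_⟩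
      intro h
      exact hfjne (congrArg (fun z : ↥(LinearMap.ker Q) => ((z : ↥W) : E →ₗ[ℝ] ℝ)) h)
    have hspan_le : Submodule.span ℝ (Set.range g) ≤ LinearMap.range Q := by
      rw [Submodule.span_le]
      rintro _ ⟨k, rfl⟩
      rcases k with i | ⟨i, i'⟩
      · by_cases hai : a i = 0
        · simp only [hg, Sum.elim_inl, hai, if_true]
          exact ⟨⟨f i, Submodule.subset_span (Set.mem_range_self i)⟩, rfl⟩
        · simp only [hg, Sum.elim_inl, hai, if_false]
          exact Submodule.zero_mem _
      · by_cases hcond : 0 < a i ∧ a i' < 0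
        · simp only [hg, Sum.elim_inr]
          rw [if_pos hcond]
          exact sub_mem
            (Submodule.smul_mem _ _ ⟨⟨f i', Submodule.subset_span (Set.mem_range_self i')⟩, rfl⟩)
            (Submodule.smul_mem _ _ ⟨⟨f i, Submodule.subset_span (Set.mem_range_self i)⟩, rfl⟩)
        · simp only [hg, Sum.elim_inr, hcond, if_false]
          exact Submodule.zero_mem _
    have hrank' : finrank ℝ ↥(Submodule.span ℝ (Set.range g)) < m := by
      have h1 := LinearMap.finrank_range_add_finrank_ker (K := ℝ) (V := ↥W) (V₂ := ↥E₀ →ₗ[ℝ] ℝ) Q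
      have h2 : finrank ℝ ↥(Submodule.span ℝ (Set.range g)) ≤ finrank ℝ ↥(LinearMap.range Q) :=
        Submodule.finrank_mono hspan_le
      omega
    -- recursive call
    obtain ⟨y0, hy0, _⟩ := hfwd x0 hx0
    have hb' : ∀ y : ↥E₀, (∀ k, g k y ≤ d k) → b ≤ (ℓ.comp E₀.subtype) y := by
      intro y hy
      obtain ⟨s, hs⟩ := (hiff y).mp hy
      have := hb _ hs
      rwa [hexp, hlv, mul_zero, add_zero] at this
    obtain ⟨z0, hz0, hz0min⟩ := ih _ hrank' ↥E₀ (ι ⊕ ι × ι) g d (ℓ.comp E₀.subtype)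
      le_rfl y0 hy0 b hb'
    obtain ⟨s, hs⟩ := (hiff z0).mp hz0
    refine ⟨↑z0 + s • v, hs, fun x hx => ?_⟩
    obtain ⟨yx, hyx, hyxl⟩ := hfwd x hx
    have hmin := hz0min yx hyx
    have : ℓ (↑z0 + s • v) = ℓ ↑z0 := by rw [hexp, hlv, mul_zero, add_zero]
    rw [this]
    calc ℓ (↑z0 : E) = (ℓ.comp E₀.subtype) z0 := rfl
      _ ≤ (ℓ.comp E₀.subtype) yx := hmin
      _ = ℓ x := hyxl

/-- A set is generalized polyhedral convex if it is the intersection of a closed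
affine subspace with finitely many half-spaces given by continuous linear functionals. -/
def IsGPC {E : Type*} [AddCommGroup E] [Module ℝ E] [TopologicalSpace E]
    (D : Set E) : Prop :=
  ∃ (n : ℕ) (f : Fin n → E →L[ℝ] ℝ) (α : Fin n → ℝ) (L : AffineSubspace ℝ E),
    IsClosed (L : Set E) ∧ D = {x | x ∈ L ∧ ∀ i, f i x ≤ α i}

set_option maxHeartbeats 1000000 in
/-- If `φ` is a proper generalized polyhedral convex function,
`F` is a generalized polyhedral convex multifunction (with graph `G`), and the
optimal value `μ(x) = inf {φ(x,y) : y ∈ F(x)}` is finite, then the infimum is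
attained. -/
theorem optimal_value_attained
    {X Y : Type*}
    [AddCommGroup X] [Module ℝ X] [TopologicalSpace X] [IsTopologicalAddGroup X]
    [ContinuousSMul ℝ X] [LocallyConvexSpace ℝ X] [T2Space X]
    [AddCommGroup Y] [Module ℝ Y] [TopologicalSpace Y] [IsTopologicalAddGroup Y]
    [ContinuousSMul ℝ Y] [LocallyConvexSpace ℝ Y] [T2Space Y]
    (φ : X × Y → EReal) (G : Set (X × Y))
    (hepi : IsGPC {p : (X × Y) × ℝ | φ p.1 ≤ (p.2 : EReal)})
    (hproper : (∀ p, φ p ≠ ⊥) ∧ (∃ p, φ p ≠ ⊤))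
    (hG : IsGPC G) (x : X)
    (μx : EReal) (hμx : μx = sInf ((fun y => φ (x, y)) '' {y : Y | (x, y) ∈ G}))
    (hfin : μx ≠ ⊥ ∧ μx ≠ ⊤) :
    ∃ y : Y, (x, y) ∈ G ∧ φ (x, y) = μx := by
  classical
  obtain ⟨n₁, f₁, α₁, L₁, hL₁c, hepiEq⟩ := hepi
  obtain ⟨n₂, f₂, α₂, L₂, hL₂c, hGEq⟩ := hG
  set A : Y × ℝ → (X × Y) × ℝ := fun p => ((x, p.1), p.2) with hA
  have hepi' : ∀ p : Y × ℝ, (φ (x, p.1) ≤ (p.2 : EReal)) ↔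
      (A p ∈ L₁ ∧ ∀ i, f₁ i (A p) ≤ α₁ i) := by
    intro p
    have := Set.ext_iff.mp hepiEq (A p)
    simpa [hA] using this
  have hG' : ∀ y : Y, ((x, y) ∈ G) ↔ ((x, y) ∈ L₂ ∧ ∀ j, f₂ j (x, y) ≤ α₂ j) :=
    fun y => Set.ext_iff.mp hGEq (x, y)
  -- the feasible set in `Y × ℝ`
  set Sfeas : Y × ℝ → Prop := fun p => φ (x, p.1) ≤ (p.2 : EReal) ∧ (x, p.1) ∈ G with hSfeas
  -- μx is a real number
  set b : ℝ := μx.toReal with hbdef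
  have hbμ : ((b : ℝ) : EReal) = μx := EReal.coe_toReal hfin.2 hfin.1
  have hμle : ∀ y : Y, (x, y) ∈ G → μx ≤ φ (x, y) := by
    intro y hy; rw [hμx]; exact sInf_le ⟨y, hy, rfl⟩
  -- a feasible starting point
  obtain ⟨w, hwI, hwlt⟩ : ∃ w ∈ (fun y => φ (x, y)) '' {y : Y | (x, y) ∈ G}, w < ⊤ :=
    sInf_lt_iff.mp (by rw [← hμx]; exact hfin.2.lt_top)
  obtain ⟨y₀, hy₀G, hy₀φ⟩ := hwI
  have hy₀top : φ (x, y₀) ≠ ⊤ := by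
    have h : φ (x, y₀) = w := hy₀φ
    rw [h]; exact hwlt.ne
  have hy₀bot : φ (x, y₀) ≠ ⊥ := hproper.1 (x, y₀)
  set r₀ : ℝ := (φ (x, y₀)).toReal with hr₀def
  have hr₀ : ((r₀ : ℝ) : EReal) = φ (x, y₀) := EReal.coe_toReal hy₀top hy₀bot
  set w0 : Y × ℝ := (y₀, r₀) with hw0def
  have hw0 : Sfeas w0 := ⟨by rw [hw0def]; exact le_of_eq hr₀.symm, hy₀G⟩
  have hw0L₁ : A w0 ∈ L₁ := ((hepi' w0).mp hw0.1).1
  have hw0L₂ : (x, w0.1) ∈ L₂ := ((hG' w0.1).mp hw0.2).1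
  -- linear structure
  set Ab : Y × ℝ →ₗ[ℝ] (X × Y) × ℝ :=
    ((LinearMap.inr ℝ X Y).comp (LinearMap.fst ℝ Y ℝ)).prod (LinearMap.snd ℝ Y ℝ) with hAb
  set Bb : Y × ℝ →ₗ[ℝ] X × Y := (LinearMap.inr ℝ X Y).comp (LinearMap.fst ℝ Y ℝ) with hBb
  have hAkey : ∀ p q : Y × ℝ, A p - A q = Ab (p - q) := by
    intro p q
    simp [hA, hAb, hBb, Prod.ext_iff, Prod.sub_def]
  have hAadd : ∀ (p : Y × ℝ) (v : Y × ℝ), A (p + v) = Ab v + A p := by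
    intro p v
    simp [hA, hAb, hBb, Prod.ext_iff, Prod.add_def, add_comm]
  have hBkey : ∀ p q : Y × ℝ, (x, p.1) - (x, q.1) = Bb (p - q) := by
    intro p q; simp [hBb, Prod.ext_iff, Prod.sub_def]
  have hBadd : ∀ (p : Y × ℝ) (v : Y × ℝ), (x, (p + v).1) = Bb v + (x, p.1) := by
    intro p v; simp [hBb, Prod.ext_iff, Prod.add_def, add_comm]
  set V : Submodule ℝ (Y × ℝ) :=
    (L₁.direction.comap Ab) ⊓ (L₂.direction.comap Bb) with hV
  -- bridge between feasibility in `Y × ℝ` and the linear program on `V`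
  set fc : (Fin n₁ ⊕ Fin n₂) → (↥V →ₗ[ℝ] ℝ) :=
    Sum.elim (fun i => (((f₁ i).toLinearMap).comp Ab).comp V.subtype)
      (fun j => (((f₂ j).toLinearMap).comp Bb).comp V.subtype) with hfc
  set cc : (Fin n₁ ⊕ Fin n₂) → ℝ :=
    Sum.elim (fun i => α₁ i - f₁ i (A w0)) (fun j => α₂ j - f₂ j (x, w0.1)) with hcc
  set ℓc : ↥V →ₗ[ℝ] ℝ := (LinearMap.snd ℝ Y ℝ).comp V.subtype with hℓc
  have hbridge : ∀ v : ↥V, (∀ k, fc k v ≤ cc k) ↔ Sfeas (w0 + ↑v) := by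
    intro v
    have hv₁ : Ab ↑v ∈ L₁.direction := (Submodule.mem_inf.mp v.2).1
    have hv₂ : Bb ↑v ∈ L₂.direction := (Submodule.mem_inf.mp v.2).2
    have hmem₁ : A (w0 + ↑v) ∈ L₁ := by
      rw [hAadd w0 ↑v, ← vadd_eq_add]
      exact AffineSubspace.vadd_mem_of_mem_direction hv₁ hw0L₁
    have hmem₂ : (x, (w0 + ↑v).1) ∈ L₂ := by
      rw [hBadd w0 ↑v, ← vadd_eq_add]
      exact AffineSubspace.vadd_mem_of_mem_direction hv₂ hw0L₂
    have happ₁ : ∀ i, f₁ i (A (w0 + ↑v)) = f₁ i (A w0) + fc (Sum.inl i) v := by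
      intro i; rw [hAadd w0 ↑v, map_add]; simp [hfc]; ring
    have happ₂ : ∀ j, f₂ j (x, (w0 + ↑v).1) = f₂ j (x, w0.1) + fc (Sum.inr j) v := by
      intro j; rw [hBadd w0 ↑v, map_add]; simp [hfc]; ring
    constructor
    · intro hk
      refine ⟨(hepi' _).mpr ⟨hmem₁, fun i => ?_⟩, (hG' _).mpr ⟨hmem₂, fun j => ?_⟩⟩
      · rw [happ₁ i]
        have := hk (Sum.inl i)
        simp only [hcc, Sum.elim_inl] at this
        linarith
      · rw [happ₂ j]
        have := hk (Sum.inr j)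
        simp only [hcc, Sum.elim_inr] at this
        linarith
    · intro hsf k
      have h₁ := ((hepi' _).mp hsf.1).2
      have h₂ := ((hG' _).mp hsf.2).2
      rcases k with i | j
      · have := h₁ i; rw [happ₁ i] at this
        simp only [hcc, Sum.elim_inl]; linarith
      · have := h₂ j; rw [happ₂ j] at this
        simp only [hcc, Sum.elim_inr]; linarith
  have hsurj : ∀ p : Y × ℝ, Sfeas p → ∃ v : ↥V, w0 + ↑v = p := by
    intro p hp
    have hp₁ : A p ∈ L₁ := ((hepi' p).mp hp.1).1
    have hp₂ : (x, p.1) ∈ L₂ := ((hG' p.1).mp hp.2).1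
    have hv : p - w0 ∈ V := by
      rw [hV, Submodule.mem_inf]
      constructor
      · rw [Submodule.mem_comap, ← hAkey p w0, ← vsub_eq_sub]
        exact (AffineSubspace.vsub_right_mem_direction_iff_mem hw0L₁ _).mpr hp₁
      · rw [Submodule.mem_comap, ← hBkey p w0, ← vsub_eq_sub]
        exact (AffineSubspace.vsub_right_mem_direction_iff_mem hw0L₂ _).mpr hp₂
    exact ⟨⟨p - w0, hv⟩, by simp⟩
  -- apply the LP lemma
  have hx0 : ∀ k, fc k (0 : ↥V) ≤ cc k := by
    intro k
    rcases k with i | j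
    · simpa [hcc] using sub_nonneg.mpr (((hepi' w0).mp hw0.1).2 i)
    · simpa [hcc] using sub_nonneg.mpr (((hG' w0.1).mp hw0.2).2 j)
  have hℓval : ∀ v : ↥V, (w0 + (v : Y × ℝ)).2 = r₀ + ℓc v := by
    intro v; simp [hℓc, hw0def, Prod.add_def]
  have hbb : ∀ v : ↥V, (∀ k, fc k v ≤ cc k) → b - r₀ ≤ ℓc v := by
    intro v hv
    have hsf := (hbridge v).mp hv
    have h1 : μx ≤ ((w0 + (v : Y × ℝ)).2 : EReal) :=
      le_trans (hμle _ hsf.2) hsf.1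
    rw [← hbμ, EReal.coe_le_coe_iff, hℓval v] at h1
    linarith
  obtain ⟨z, hz, hzmin⟩ := lpmin (Module.finrank ℝ (Submodule.span ℝ (Set.range fc)))
    ↥V (Fin n₁ ⊕ Fin n₂) fc cc ℓc le_rfl 0 hx0 (b - r₀) hbb
  have hzS : Sfeas (w0 + ↑z) := (hbridge z).mp hz
  set p' : Y × ℝ := w0 + ↑z with hp'
  have hmin : ∀ p : Y × ℝ, Sfeas p → p'.2 ≤ p.2 := by
    intro p hp
    obtain ⟨v, hvp⟩ := hsurj p hp
    have hvfeas := (hbridge v).mpr (hvp ▸ hp)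
    have := hzmin v hvfeas
    rw [← hvp, hℓval, hℓval]
    linarith
  refine ⟨p'.1, hzS.2, ?_⟩
  have h1 : μx ≤ φ (x, p'.1) := hμle _ hzS.2
  have h2 : φ (x, p'.1) ≤ (p'.2 : EReal) := hzS.1
  have h3 : ((p'.2 : ℝ) : EReal) ≤ μx := by
    rw [hμx]
    refine le_sInf ?_
    rintro w' ⟨y, hyG, rfl⟩
    show ((p'.2 : ℝ) : EReal) ≤ φ (x, y)
    by_cases htop : φ (x, y) = ⊤
    · rw [htop]; exact le_top
    · have hbot : φ (x, y) ≠ ⊥ := hproper.1 (x, y)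
      have hcoe : (((φ (x, y)).toReal : ℝ) : EReal) = φ (x, y) := EReal.coe_toReal htop hbot
      have hfeas : Sfeas (y, (φ (x, y)).toReal) := ⟨le_of_eq hcoe.symm, hyG⟩
      have := hmin _ hfeas
      rw [← hcoe]
      exact_mod_cast this
  exact le_antisymm (h2.trans h3) h1
end

section
/- Let X, Y be locally convex Hausdorff topological vector spaces, φ : X × Y → ℝ̄ a proper polyhedral convex function, and F : X ⇒ Y a polyhedral convex multifunction. Then the optimal value function μ(x) = inf{φ(x,y) : y ∈ F(x)} is a polyhedral convex function, i.e., epi μ is a polyhedral convex set in X × ℝ. -/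
/-- A set is polyhedral convex if it is a finite intersection of half-spaces
given by continuous linear functionals. -/
def IsPolyhedralConvex {E : Type*} [AddCommGroup E] [Module ℝ E] [TopologicalSpace E]
    (D : Set E) : Prop :=
  ∃ (n : ℕ) (f : Fin n → E →L[ℝ] ℝ) (α : Fin n → ℝ),
    D = {x | ∀ i, f i x ≤ α i}

theorem IsPolyhedralConvex.of_fintype {E : Type*} [AddCommGroup E] [Module ℝ E]
    [TopologicalSpace E] {ι : Type} [Fintype ι] (f : ι → E →L[ℝ] ℝ) (α : ι → ℝ) :
    IsPolyhedralConvex {x : E | ∀ i, f i x ≤ α i} := by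
  classical
  refine ⟨Fintype.card ι, fun j => f ((Fintype.equivFin ι).symm j),
    fun j => α ((Fintype.equivFin ι).symm j), ?_⟩
  ext x
  simp only [Set.mem_setOf_eq]
  exact ⟨fun h j => h _, fun h i => by simpa using h (Fintype.equivFin ι i)⟩

theorem IsPolyhedralConvex.preimage {E F : Type*} [AddCommGroup E] [Module ℝ E]
    [TopologicalSpace E] [AddCommGroup F] [Module ℝ F] [TopologicalSpace F]
    (T : E →L[ℝ] F) {D : Set F} (hD : IsPolyhedralConvex D) :
    IsPolyhedralConvex (T ⁻¹' D) := by
  obtain ⟨n, f, α, rfl⟩ := hD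
  exact ⟨n, fun i => (f i).comp T, α, rfl⟩

theorem IsPolyhedralConvex.inter {E : Type*} [AddCommGroup E] [Module ℝ E]
    [TopologicalSpace E] {C D : Set E} (hC : IsPolyhedralConvex C)
    (hD : IsPolyhedralConvex D) : IsPolyhedralConvex (C ∩ D) := by
  obtain ⟨n, f, α, rfl⟩ := hC
  obtain ⟨m, g, β, rfl⟩ := hD
  have : ({x : E | ∀ i, f i x ≤ α i} ∩ {x | ∀ i, g i x ≤ β i})
      = {x : E | ∀ r : Fin n ⊕ Fin m, Sum.elim f g r x ≤ Sum.elim α β r} := by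
    ext x
    simp [Sum.forall, Set.mem_setOf_eq]
  rw [this]
  exact IsPolyhedralConvex.of_fintype _ _

/-- One-variable Fourier–Motzkin elimination: the projection of a polyhedral
convex subset of `E × ℝ` onto `E` is polyhedral convex. -/
theorem IsPolyhedralConvex.fm1 {E : Type*} [AddCommGroup E] [Module ℝ E] [TopologicalSpace E]
    {D : Set (E × ℝ)} (hD : IsPolyhedralConvex D) :
    IsPolyhedralConvex {x : E | ∃ t : ℝ, (x, t) ∈ D} := by
  classical
  obtain ⟨n, f, α, rfl⟩ := hD
  set g : Fin n → E →L[ℝ] ℝ := fun i => (f i).comp (ContinuousLinearMap.inl ℝ E ℝ) with hg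
  set d : Fin n → ℝ := fun i => f i (0, 1) with hd
  have hsplit : ∀ (i : Fin n) (x : E) (t : ℝ), f i (x, t) = g i x + t * d i := by
    intro i x t
    have hxt : (x, t) = (x, 0) + t • ((0 : E), (1 : ℝ)) := by
      simp [Prod.ext_iff]
    rw [hxt, map_add, map_smul]
    simp [hg, hd, smul_eq_mul]
  set F : (Fin n ⊕ Fin n × Fin n) → E →L[ℝ] ℝ := fun r =>
    match r with
    | Sum.inl i => if d i = 0 then g i else 0
    | Sum.inr (i, j) => if 0 < d i ∧ d j < 0 then d i • g j - d j • g i else 0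
  set A : (Fin n ⊕ Fin n × Fin n) → ℝ := fun r =>
    match r with
    | Sum.inl i => if d i = 0 then α i else 0
    | Sum.inr (i, j) => if 0 < d i ∧ d j < 0 then d i * α j - d j * α i else 0
  have key : {x : E | ∃ t : ℝ, (x, t) ∈ {p : E × ℝ | ∀ i, f i p ≤ α i}}
      = {x : E | ∀ r, F r x ≤ A r} := by
    ext x
    simp only [Set.mem_setOf_eq]
    constructor
    · rintro ⟨t, ht⟩ r
      have hi : ∀ i, g i x + t * d i ≤ α i := fun i => by rw [← hsplit]; exact ht i
      match r with
      | Sum.inl i =>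
        simp only [F, A]
        split_ifs with h0
        · have := hi i; rw [h0] at this; simpa using this
        · simp
      | Sum.inr (i, j) =>
        simp only [F, A]
        split_ifs with h0
        · obtain ⟨hdi, hdj⟩ := h0
          have h1 := hi i
          have h2 := hi j
          simp only [ContinuousLinearMap.sub_apply, ContinuousLinearMap.smul_apply,
            smul_eq_mul]
          nlinarith [h1, h2, hdi, hdj]
        · simp
    · intro hx
      set Pos : Finset (Fin n) := Finset.univ.filter (fun i => 0 < d i) with hPos
      set Neg : Finset (Fin n) := Finset.univ.filter (fun i => d i < 0) with hNeg
      have hzero : ∀ i, d i = 0 → g i x ≤ α i := by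
        intro i h0
        have := hx (Sum.inl i)
        simpa [F, A, h0] using this
      have hpair : ∀ i j, 0 < d i → d j < 0 →
          d i * g j x - d j * g i x ≤ d i * α j - d j * α i := by
        intro i j hdi hdj
        have := hx (Sum.inr (i, j))
        simpa [F, A, hdi, hdj] using this
      by_cases hP : Pos.Nonempty
      · set t := Pos.inf' hP (fun i => (α i - g i x) / d i) with hT
        refine ⟨t, fun i => ?_⟩
        rw [hsplit]
        rcases lt_trichotomy (d i) 0 with hneg | h0 | hpos
        · obtain ⟨i₀, hi₀mem, hi₀⟩ := Finset.exists_mem_eq_inf' hP (fun i => (α i - g i x) / d i)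
          have hdi₀ : 0 < d i₀ := (Finset.mem_filter.mp hi₀mem).2
          have hcon := hpair i₀ i hdi₀ hneg
          have htv : t = (α i₀ - g i₀ x) / d i₀ := hi₀
          have h3 : t * d i ≤ α i - g i x := by
            rw [htv, div_mul_eq_mul_div, div_le_iff₀ hdi₀]
            nlinarith [hcon]
          linarith
        · have := hzero i h0
          rw [h0]
          simpa using this
        · have h4 : t ≤ (α i - g i x) / d i :=
            Finset.inf'_le _ (Finset.mem_filter.mpr ⟨Finset.mem_univ i, hpos⟩)
          have h5 : t * d i ≤ α i - g i x := by
            calc t * d i ≤ ((α i - g i x) / d i) * d i :=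
                  mul_le_mul_of_nonneg_right h4 hpos.le
              _ = α i - g i x := div_mul_cancel₀ _ hpos.ne'
          linarith
      · have hnopos : ∀ i, ¬ 0 < d i := by
          intro i hdi
          exact hP ⟨i, Finset.mem_filter.mpr ⟨Finset.mem_univ i, hdi⟩⟩
        by_cases hN : Neg.Nonempty
        · set t := Neg.sup' hN (fun i => (α i - g i x) / d i) with hT
          refine ⟨t, fun i => ?_⟩
          rw [hsplit]
          rcases lt_trichotomy (d i) 0 with hneg | h0 | hpos
          · have hmem : i ∈ Neg := Finset.mem_filter.mpr ⟨Finset.mem_univ i, hneg⟩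
            have h4 : (α i - g i x) / d i ≤ t :=
              Finset.le_sup' (fun i => (α i - g i x) / d i) hmem
            have h5 : t * d i ≤ ((α i - g i x) / d i) * d i :=
              mul_le_mul_of_nonpos_right h4 hneg.le
            have h6 : ((α i - g i x) / d i) * d i = α i - g i x :=
              div_mul_cancel₀ _ hneg.ne
            linarith
          · have := hzero i h0; rw [h0]; simpa using this
          · exact absurd hpos (hnopos i)
        · refine ⟨0, fun i => ?_⟩
          rw [hsplit]
          rcases lt_trichotomy (d i) 0 with hneg | h0 | hpos
          · exact absurd ⟨i, Finset.mem_filter.mpr ⟨Finset.mem_univ i, hneg⟩⟩ hN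
          · have := hzero i h0; rw [h0]; simpa using this
          · exact absurd hpos (hnopos i)
  rw [key]
  exact IsPolyhedralConvex.of_fintype _ _

/-- `Fin.snoc` as a continuous linear map. -/
def snocCLM (k : ℕ) : ((Fin k → ℝ) × ℝ) →L[ℝ] (Fin (k + 1) → ℝ) :=
  { toLinearMap :=
    { toFun := fun q => Fin.snoc q.1 q.2
      map_add' := fun a b => by
        funext j
        refine Fin.lastCases ?_ (fun j' => ?_) j <;>
          simp [Fin.snoc_castSucc, Fin.snoc_last]
      map_smul' := fun c a => by
        funext j
        refine Fin.lastCases ?_ (fun j' => ?_) j <;>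
          simp [Fin.snoc_castSucc, Fin.snoc_last] }
    cont := by
      apply continuous_pi
      intro j
      refine Fin.lastCases ?_ (fun j' => ?_) j
      · simpa [Fin.snoc_last] using continuous_snd
      · simp [Fin.snoc_castSucc]
        exact (continuous_apply j').comp continuous_fst }

@[simp] theorem snocCLM_apply (k : ℕ) (q : (Fin k → ℝ) × ℝ) :
    snocCLM k q = Fin.snoc q.1 q.2 := rfl

/-- Multi-variable Fourier–Motzkin elimination. -/
theorem IsPolyhedralConvex.fmk {E : Type*} [AddCommGroup E] [Module ℝ E] [TopologicalSpace E] :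
    ∀ (k : ℕ) (D : Set (E × (Fin k → ℝ))), IsPolyhedralConvex D →
    IsPolyhedralConvex {x : E | ∃ s : Fin k → ℝ, (x, s) ∈ D} := by
  intro k
  induction k with
  | zero =>
    intro D hD
    have hset : {x : E | ∃ s : Fin 0 → ℝ, (x, s) ∈ D}
        = (ContinuousLinearMap.inl ℝ E (Fin 0 → ℝ)) ⁻¹' D := by
      ext x
      constructor
      · rintro ⟨s, hs⟩
        have : s = 0 := Subsingleton.elim _ _
        subst this
        exact hs
      · intro hx
        exact ⟨0, hx⟩
    rw [hset]
    exact IsPolyhedralConvex.preimage _ hD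
  | succ k ih =>
    intro D hD
    set T : ((E × (Fin k → ℝ)) × ℝ) →L[ℝ] (E × (Fin (k + 1) → ℝ)) :=
      ((ContinuousLinearMap.fst ℝ E (Fin k → ℝ)).comp
        (ContinuousLinearMap.fst ℝ (E × (Fin k → ℝ)) ℝ)).prod
      ((snocCLM k).comp
        (((ContinuousLinearMap.snd ℝ E (Fin k → ℝ)).comp
          (ContinuousLinearMap.fst ℝ (E × (Fin k → ℝ)) ℝ)).prod
          (ContinuousLinearMap.snd ℝ (E × (Fin k → ℝ)) ℝ))) with hT
    have hTapp : ∀ (x : E) (s : Fin k → ℝ) (t : ℝ),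
        T ((x, s), t) = (x, Fin.snoc s t) := by
      intro x s t
      simp [hT, ContinuousLinearMap.prod_apply]
    have hD' : IsPolyhedralConvex (T ⁻¹' D) := IsPolyhedralConvex.preimage T hD
    have hP : IsPolyhedralConvex {p : E × (Fin k → ℝ) | ∃ t : ℝ, (p, t) ∈ T ⁻¹' D} :=
      IsPolyhedralConvex.fm1 hD'
    have hmain := ih _ hP
    have hset : {x : E | ∃ s : Fin k → ℝ,
        (x, s) ∈ {p : E × (Fin k → ℝ) | ∃ t : ℝ, (p, t) ∈ T ⁻¹' D}}
        = {x : E | ∃ s : Fin (k + 1) → ℝ, (x, s) ∈ D} := by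
      ext x
      simp only [Set.mem_setOf_eq, Set.mem_preimage]
      constructor
      · rintro ⟨s, t, hst⟩
        rw [hTapp] at hst
        exact ⟨Fin.snoc s t, hst⟩
      · rintro ⟨s, hs⟩
        refine ⟨Fin.init s, s (Fin.last k), ?_⟩
        rw [hTapp, Fin.snoc_init_self]
        exact hs
    rw [hset] at hmain
    exact hmain

/-- Final step: identify the epigraph of the value function with the projection set. -/
theorem final_step {X Y : Type*}
    [AddCommGroup X] [Module ℝ X] [TopologicalSpace X]
    (φ : X × Y → EReal) (G : Set (X × Y))
    (μ : X → EReal) (hμ : ∀ x, μ x = sInf ((fun y => φ (x, y)) '' {y : Y | (x, y) ∈ G}))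
    (P : Set (X × ℝ)) (hpoly : IsPolyhedralConvex P)
    (hkey : ∀ (x : X) (t : ℝ),
      (x, t) ∈ P ↔ ∃ y : Y, φ (x, y) ≤ (t : EReal) ∧ (x, y) ∈ G) :
    IsPolyhedralConvex {q : X × ℝ | μ q.1 ≤ (q.2 : EReal)} := by
  obtain ⟨M, h, δ, hPrep⟩ := hpoly
  have hfinal : {q : X × ℝ | μ q.1 ≤ (q.2 : EReal)} = P := by
    ext ⟨x, t⟩
    simp only [Set.mem_setOf_eq]
    constructor
    · intro hxt
      have hstep : ∀ ε : ℝ, 0 < ε → (x, t + ε) ∈ P := by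
        intro ε hε
        have hlt : μ x < ((t + ε : ℝ) : EReal) :=
          lt_of_le_of_lt hxt (by exact_mod_cast (by linarith : t < t + ε))
        rw [hμ] at hlt
        obtain ⟨e, heS, helt⟩ := sInf_lt_iff.mp hlt
        obtain ⟨y, hyG, hye⟩ := heS
        have hφe : φ (x, y) = e := hye
        exact (hkey x (t + ε)).mpr ⟨y, by rw [hφe]; exact le_of_lt helt, hyG⟩
      rw [hPrep]
      intro r
      set c := h r ((0 : X), (1 : ℝ)) with hc
      have heps : ∀ ε : ℝ, 0 < ε → h r (x, t) + ε * c ≤ δ r := by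
        intro ε hε
        have hmem := hstep ε hε
        rw [hPrep] at hmem
        have hm := hmem r
        have hsplit2 : ((x, t + ε) : X × ℝ) = (x, t) + ε • ((0 : X), (1 : ℝ)) := by
          simp [Prod.ext_iff]
        rw [hsplit2, map_add, map_smul, smul_eq_mul] at hm
        exact hm
      by_contra hcon
      push_neg at hcon
      rcases le_or_gt 0 c with hc0 | hc0
      · have := heps 1 one_pos
        nlinarith
      · set ε := (h r (x, t) - δ r) / (-2 * c) with hε
        have hεpos : 0 < ε := div_pos (by linarith) (by linarith)
        have hcne : c ≠ 0 := ne_of_lt hc0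
        have hεc : ε * c = -(h r (x, t) - δ r) / 2 := by
          rw [hε]
          field_simp
        have hfin := heps ε hεpos
        rw [hεc] at hfin
        linarith
    · intro hxt
      obtain ⟨y, hφ, hyG⟩ := (hkey x t).mp hxt
      calc μ x = sInf ((fun y => φ (x, y)) '' {y : Y | (x, y) ∈ G}) := hμ x
        _ ≤ φ (x, y) := sInf_le ⟨y, hyG, rfl⟩
        _ ≤ (t : EReal) := hφ
  rw [hfinal]
  exact ⟨M, h, δ, hPrep⟩

/-- If `φ : X × Y → ℝ̄` is a proper polyhedral convex function
and `F` a polyhedral convex multifunction (with graph `G`), then the optimal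
value function `μ(x) = inf {φ(x,y) : y ∈ F(x)}` is polyhedral convex, i.e. its
epigraph is a polyhedral convex subset of `X × ℝ`. -/
theorem optimal_value_polyhedral
    {X Y : Type*}
    [AddCommGroup X] [Module ℝ X] [TopologicalSpace X] [IsTopologicalAddGroup X]
    [ContinuousSMul ℝ X] [LocallyConvexSpace ℝ X] [T2Space X]
    [AddCommGroup Y] [Module ℝ Y] [TopologicalSpace Y] [IsTopologicalAddGroup Y]
    [ContinuousSMul ℝ Y] [LocallyConvexSpace ℝ Y] [T2Space Y]
    (φ : X × Y → EReal) (G : Set (X × Y))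
    (hepi : IsPolyhedralConvex {p : (X × Y) × ℝ | φ p.1 ≤ (p.2 : EReal)})
    (hproper : (∀ p, φ p ≠ ⊥) ∧ (∃ p, φ p ≠ ⊤))
    (hG : IsPolyhedralConvex G)
    (μ : X → EReal) (hμ : ∀ x, μ x = sInf ((fun y => φ (x, y)) '' {y : Y | (x, y) ∈ G})) :
    IsPolyhedralConvex {q : X × ℝ | μ q.1 ≤ (q.2 : EReal)} := by
  classical
  -- Step 1: the constraint set Q = epi φ ∩ (G × ℝ)
  have hQpoly : IsPolyhedralConvex
      {p : (X × Y) × ℝ | φ p.1 ≤ (p.2 : EReal) ∧ p.1 ∈ G} := by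
    have h1 : IsPolyhedralConvex
        ((ContinuousLinearMap.fst ℝ (X × Y) ℝ) ⁻¹' G) :=
      IsPolyhedralConvex.preimage _ hG
    have heq : {p : (X × Y) × ℝ | φ p.1 ≤ (p.2 : EReal) ∧ p.1 ∈ G}
        = {p : (X × Y) × ℝ | φ p.1 ≤ (p.2 : EReal)} ∩
          ((ContinuousLinearMap.fst ℝ (X × Y) ℝ) ⁻¹' G) := by
      ext p
      simp [Set.mem_inter_iff, Set.mem_preimage]
    rw [heq]
    exact hepi.inter h1
  obtain ⟨N, f, γ, hQ⟩ := hQpoly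
  -- Step 2: decompose the functionals
  set J : (X × ℝ) →L[ℝ] ((X × Y) × ℝ) :=
    (ContinuousLinearMap.inl ℝ X Y).prodMap (ContinuousLinearMap.id ℝ ℝ) with hJ
  set K : Y →L[ℝ] ((X × Y) × ℝ) :=
    (ContinuousLinearMap.inl ℝ (X × Y) ℝ).comp (ContinuousLinearMap.inr ℝ X Y) with hK
  set a : Fin N → (X × ℝ) →L[ℝ] ℝ := fun i => (f i).comp J with ha
  set b : Fin N → Y →L[ℝ] ℝ := fun i => (f i).comp K with hb
  have hdec : ∀ (i : Fin N) (x : X) (y : Y) (t : ℝ),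
      f i ((x, y), t) = a i (x, t) + b i y := by
    intro i x y t
    have hsum : ((x, y), t) = (((x, (0 : Y)), t) : (X × Y) × ℝ) + (((0 : X), y), (0 : ℝ)) := by
      simp [Prod.ext_iff]
    rw [hsum, map_add]
    simp [ha, hb, hJ, hK]
  -- Step 3: finite generation of the image of Y in `Fin N → ℝ`
  set B : Y →ₗ[ℝ] (Fin N → ℝ) := LinearMap.pi (fun i => (b i : Y →ₗ[ℝ] ℝ)) with hB
  have hBapp : ∀ (y : Y) (i : Fin N), B y i = b i y := fun y i => rfl
  obtain ⟨S, hS⟩ : (LinearMap.range B).FG := IsNoetherian.noetherian _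
  set k := S.card with hk
  set v : Fin k → (Fin N → ℝ) := fun j => ((S.equivFin.symm j : S) : Fin N → ℝ) with hv
  have hrange : Set.range v = (S : Set (Fin N → ℝ)) := by
    ext w
    constructor
    · rintro ⟨j, rfl⟩
      exact (S.equivFin.symm j).2
    · intro hw
      exact ⟨S.equivFin ⟨w, hw⟩, by simp [hv]⟩
  have hspan : Submodule.span ℝ (Set.range v) = LinearMap.range B := by
    rw [hrange, hS]
  have hy₀ : ∀ j : Fin k, ∃ y : Y, B y = v j := by
    intro j
    have hvj : v j ∈ LinearMap.range B := by
      rw [← hS]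
      exact Submodule.subset_span (by rw [← hrange]; exact ⟨j, rfl⟩)
    exact hvj
  choose y₀ hy₀eq using hy₀
  -- Step 4: the polyhedral set D in (X × ℝ) × (Fin k → ℝ)
  set Fi : Fin N → ((X × ℝ) × (Fin k → ℝ)) →L[ℝ] ℝ := fun i =>
    (a i).comp (ContinuousLinearMap.fst ℝ (X × ℝ) (Fin k → ℝ)) +
    ∑ j : Fin k, (v j i) •
      ((ContinuousLinearMap.proj j).comp
        (ContinuousLinearMap.snd ℝ (X × ℝ) (Fin k → ℝ))) with hFi
  have hFiapp : ∀ (i : Fin N) (p : (X × ℝ) × (Fin k → ℝ)),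
      Fi i p = a i p.1 + ∑ j : Fin k, v j i * p.2 j := by
    intro i p
    simp [hFi, ContinuousLinearMap.sum_apply, smul_eq_mul]
  set D : Set ((X × ℝ) × (Fin k → ℝ)) := {p | ∀ i, Fi i p ≤ γ i} with hD
  have hDpoly : IsPolyhedralConvex D := ⟨N, Fi, γ, rfl⟩
  -- Step 5: the projection P
  have hPpoly : IsPolyhedralConvex {z : X × ℝ | ∃ s : Fin k → ℝ, (z, s) ∈ D} :=
    IsPolyhedralConvex.fmk k D hDpoly
  set P : Set (X × ℝ) := {z : X × ℝ | ∃ s : Fin k → ℝ, (z, s) ∈ D} with hP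
  -- Step 6: characterization of P
  have hPiff : ∀ z : X × ℝ, z ∈ P ↔ ∃ y : Y, ∀ i, a i z + b i y ≤ γ i := by
    intro z
    constructor
    · rintro ⟨s, hs⟩
      refine ⟨∑ j : Fin k, s j • y₀ j, fun i => ?_⟩
      have hby : b i (∑ j : Fin k, s j • y₀ j) = ∑ j : Fin k, v j i * s j := by
        rw [map_sum]
        congr 1
        funext j
        rw [map_smul, smul_eq_mul]
        have hbv : b i (y₀ j) = v j i := by rw [← hBapp, hy₀eq]
        rw [hbv, mul_comm]
      rw [hby]
      have hsi := hs i
      rw [hFiapp] at hsi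
      exact hsi
    · rintro ⟨y, hy⟩
      have hmem : B y ∈ Submodule.span ℝ (Set.range v) := by
        rw [hspan]; exact ⟨y, rfl⟩
      obtain ⟨c, hc⟩ := (Submodule.mem_span_range_iff_exists_fun ℝ).mp hmem
      refine ⟨c, fun i => ?_⟩
      rw [hFiapp]
      have hsum : ∑ j : Fin k, v j i * c j = b i y := by
        have hci := congrFun hc i
        simp only [Finset.sum_apply, Pi.smul_apply, smul_eq_mul] at hci
        rw [← hBapp y i, ← hci]
        congr 1
        funext j
        ring
      rw [hsum]
      exact hy i
  -- Step 7: rephrase the characterization in terms of φ and G, then abstract P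
  have hkey : ∀ (x : X) (t : ℝ),
      (x, t) ∈ P ↔ ∃ y : Y, φ (x, y) ≤ (t : EReal) ∧ (x, y) ∈ G := by
    intro x t
    rw [hPiff]
    constructor
    · rintro ⟨y, hy⟩
      have hm : ((x, y), t) ∈ {p : (X × Y) × ℝ | ∀ i, f i p ≤ γ i} := by
        intro i
        rw [hdec]
        exact hy i
      rw [← hQ] at hm
      exact ⟨y, hm.1, hm.2⟩
    · rintro ⟨y, h1, h2⟩
      have hm : ((x, y), t) ∈ {p : (X × Y) × ℝ | φ p.1 ≤ (p.2 : EReal) ∧ p.1 ∈ G} :=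
        ⟨h1, h2⟩
      rw [hQ] at hm
      exact ⟨y, fun i => by rw [← hdec]; exact hm i⟩
  exact final_step φ G μ hμ P hPpoly hkey
end

section
/- Let X be a locally convex Hausdorff topological vector space and let P = {x ∈ L : ⟨x_i*, x⟩ ≤ α_i, i = 1,…,m} be a nonempty generalized polyhedral convex set, where L is a closed affine subspace. Let I = {i : ∃ x̂ ∈ P with ⟨x_i*, x̂⟩ < α_i}. Then the relative interior of P is nonempty and qri P = iri P = ri P = {x ∈ P : ⟨x_i*, x⟩ < α_i for all i ∈ I}. -/
variable {E : Type*} [AddCommGroup E] [Module ℝ E] [TopologicalSpace E]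

/-- The cone generated by a set: all nonnegative multiples of its elements. -/
def coneOf (s : Set E) : Set E := {x | ∃ c : ℝ, 0 ≤ c ∧ ∃ v ∈ s, x = c • v}

/-- The relative interior of a set. -/
def riSet (Ω : Set E) : Set E :=
  {a ∈ Ω | ∃ V ∈ nhds (0 : E),
    {x | ∃ v ∈ V, x = a + v} ∩ closure (affineSpan ℝ Ω : Set E) ⊆ Ω}

/-- The intrinsic relative interior: points `a` for which `cone (Ω - a)` is a
linear subspace. -/
def iriSet (Ω : Set E) : Set E :=
  {a ∈ Ω | ∃ S : Submodule ℝ E, (S : Set E) = coneOf ((fun x => x - a) '' Ω)}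

/-- The quasi-relative interior: points `a` for which `cl (cone (Ω - a))` is a
linear subspace. -/
def qriSet (Ω : Set E) : Set E :=
  {a ∈ Ω | ∃ S : Submodule ℝ E, (S : Set E) = closure (coneOf ((fun x => x - a) '' Ω))}


/-- The hyperplane `{x | g x = c}` as an affine subspace. -/
def ctsHyperplane {X : Type*} [AddCommGroup X] [Module ℝ X] [TopologicalSpace X]
    (g : X →L[ℝ] ℝ) (c : ℝ) : AffineSubspace ℝ X where
  carrier := {x | g x = c}
  smul_vsub_vadd_mem' t p₁ p₂ p₃ h1 h2 h3 := by
    simp only [Set.mem_setOf_eq] at *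
    simp [vsub_eq_sub, vadd_eq_add, h1, h2, h3]

/-- For a nonempty generalized polyhedral convex set
`P = {x ∈ L : ⟨xᵢ*, x⟩ ≤ αᵢ}`, the relative interior of `P` is nonempty and
`qri P = iri P = ri P = {x ∈ P : ⟨xᵢ*, x⟩ < αᵢ for all i ∈ I}`, where
`I = {i : ∃ xh ∈ P, ⟨xᵢ*, xh⟩ < αᵢ}`. -/
theorem relative_interiors_of_gpc
    {X : Type*} [AddCommGroup X] [Module ℝ X] [TopologicalSpace X]
    [IsTopologicalAddGroup X] [ContinuousSMul ℝ X] [LocallyConvexSpace ℝ X] [T2Space X]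
    {m : ℕ} (f : Fin m → X →L[ℝ] ℝ) (α : Fin m → ℝ)
    (L : AffineSubspace ℝ X) (hL : IsClosed (L : Set X))
    (P : Set X) (hP : P = {x | x ∈ L ∧ ∀ i, f i x ≤ α i})
    (hne : P.Nonempty) :
    (riSet P).Nonempty ∧
    qriSet P = riSet P ∧
    iriSet P = riSet P ∧
    riSet P = {x ∈ P | ∀ i, (∃ xh ∈ P, f i xh < α i) → f i x < α i} := by
  classical
  have hPmem : ∀ x, x ∈ P ↔ x ∈ L ∧ ∀ i, f i x ≤ α i := by
    intro x; rw [hP]; exact Iff.rfl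
  have hEq : ∀ i, ¬ (∃ xh ∈ P, f i xh < α i) → ∀ x ∈ P, f i x = α i := by
    intro i hi x hx
    by_contra hne'
    exact hi ⟨x, hx, lt_of_le_of_ne (((hPmem x).1 hx).2 i) hne'⟩
  set Q : Set X := {x ∈ P | ∀ i, (∃ xh ∈ P, f i xh < α i) → f i x < α i} with hQdef
  -- ### Q is nonempty
  have key : ∀ s : Finset (Fin m), ∃ x ∈ P, ∀ i ∈ s, (∃ xh ∈ P, f i xh < α i) → f i x < α i := by
    intro s
    induction s using Finset.induction_on with
    | empty =>
      obtain ⟨x, hx⟩ := hne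
      exact ⟨x, hx, by simp⟩
    | @insert i s his ih =>
      obtain ⟨y, hyP, hy⟩ := ih
      by_cases hw : ∃ xh ∈ P, f i xh < α i
      · obtain ⟨z, hzP, hz⟩ := hw
        refine ⟨(1/2 : ℝ) • (y -ᵥ z) +ᵥ z, ?_, ?_⟩
        · refine (hPmem _).2 ⟨L.smul_vsub_vadd_mem (1/2) ((hPmem y).1 hyP).1
            ((hPmem z).1 hzP).1 ((hPmem z).1 hzP).1, ?_⟩
          intro j
          have h1 : f j y ≤ α j := ((hPmem y).1 hyP).2 j
          have h2 : f j z ≤ α j := ((hPmem z).1 hzP).2 j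
          have : f j ((1/2 : ℝ) • (y -ᵥ z) +ᵥ z) = (1/2) * (f j y - f j z) + f j z := by
            simp [vsub_eq_sub, vadd_eq_add]
          rw [this]; linarith
        · intro j hj hwj
          have h1 : f j y ≤ α j := ((hPmem y).1 hyP).2 j
          have h2 : f j z ≤ α j := ((hPmem z).1 hzP).2 j
          have hval : f j ((1/2 : ℝ) • (y -ᵥ z) +ᵥ z) = (1/2) * (f j y - f j z) + f j z := by
            simp [vsub_eq_sub, vadd_eq_add]
          rw [hval]
          rcases Finset.mem_insert.1 hj with rfl | hj'
          · linarith
          · have := hy j hj' hwj; linarith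
      · refine ⟨y, hyP, ?_⟩
        intro j hj hwj
        rcases Finset.mem_insert.1 hj with rfl | hj'
        · exact absurd hwj hw
        · exact hy j hj' hwj
  have hQne : Q.Nonempty := by
    obtain ⟨x, hxP, hx⟩ := key Finset.univ
    exact ⟨x, hxP, fun i hi => hx i (Finset.mem_univ i) hi⟩
  -- ### closure of the affine span is contained in L and in the inactive hyperplanes
  have hspanL : closure ((affineSpan ℝ P : AffineSubspace ℝ X) : Set X) ⊆ (L : Set X) :=
    closure_minimal (affineSpan_le.2 (fun x hx => ((hPmem x).1 hx).1)) hL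
  have hspanH : ∀ i, ¬ (∃ xh ∈ P, f i xh < α i) →
      closure ((affineSpan ℝ P : AffineSubspace ℝ X) : Set X) ⊆ {x | f i x = α i} := by
    intro i hi
    refine closure_minimal ?_ ?_
    · exact (affineSpan_le (Q := ctsHyperplane (f i) (α i))).2 (fun x hx => hEq i hi x hx)
    · have : {x | f i x = α i} = (f i) ⁻¹' {α i} := rfl
      rw [this]; exact isClosed_singleton.preimage (f i).continuous
  -- ### riSet P ⊆ Q
  have hri_sub : riSet P ⊆ Q := by
    rintro a ⟨haP, V, hV, hsub⟩
    refine ⟨haP, ?_⟩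
    intro i hw
    by_contra hlt
    have hai : f i a = α i := le_antisymm (((hPmem a).1 haP).2 i) (not_lt.1 hlt)
    obtain ⟨z, hzP, hz⟩ := hw
    have hc : Continuous (fun t : ℝ => t • (a - z)) := continuous_id.smul continuous_const
    have hmem : (fun t : ℝ => t • (a - z)) ⁻¹' V ∈ nhds (0:ℝ) := by
      apply hc.continuousAt.preimage_mem_nhds
      simpa using hV
    obtain ⟨ε, hε, hball⟩ := Metric.mem_nhds_iff.1 hmem
    set t : ℝ := ε/2 with ht_def
    have ht : 0 < t := by positivity
    have htV : t • (a - z) ∈ V := by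
      apply hball
      simp only [Metric.mem_ball, Real.dist_eq, sub_zero]
      rw [abs_of_pos ht]; simp [ht_def]; linarith
    have hpP : a + t • (a - z) ∈ P := by
      apply hsub
      constructor
      · exact ⟨t • (a - z), htV, rfl⟩
      · apply subset_closure
        have haS : a ∈ affineSpan ℝ P := mem_affineSpan ℝ haP
        have hzS : z ∈ affineSpan ℝ P := mem_affineSpan ℝ hzP
        have := (affineSpan ℝ P).smul_vsub_vadd_mem t haS hzS haS
        simpa [vsub_eq_sub, vadd_eq_add, add_comm] using this
    have hle : f i (a + t • (a - z)) ≤ α i := ((hPmem _).1 hpP).2 i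
    have hval : f i (a + t • (a - z)) = α i + t * (α i - f i z) := by
      simp [hai]
    rw [hval] at hle
    nlinarith [mul_pos ht (sub_pos.2 hz)]
  -- ### Q ⊆ riSet P
  have hQ_ri : Q ⊆ riSet P := by
    rintro a ⟨haP, ha⟩
    refine ⟨haP, ?_⟩
    set Ifin : Finset (Fin m) := Finset.univ.filter (fun i => ∃ xh ∈ P, f i xh < α i) with hIfin
    refine ⟨⋂ i ∈ Ifin, (f i) ⁻¹' (Set.Iio (α i - f i a)), ?_, ?_⟩
    · apply (Filter.biInter_finset_mem _).2
      intro i hi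
      have hWi : ∃ xh ∈ P, f i xh < α i := (Finset.mem_filter.1 hi).2
      apply (isOpen_Iio.preimage (f i).continuous).mem_nhds
      simp only [Set.mem_preimage, map_zero, Set.mem_Iio]
      linarith [ha i hWi]
    · rintro x ⟨⟨v, hvV, rfl⟩, hxcl⟩
      refine (hPmem _).2 ⟨hspanL hxcl, ?_⟩
      intro j
      by_cases hw : ∃ xh ∈ P, f j xh < α j
      · have hj : j ∈ Ifin := Finset.mem_filter.2 ⟨Finset.mem_univ j, hw⟩
        have := Set.mem_iInter₂.1 hvV j hj
        simp only [Set.mem_preimage, Set.mem_Iio] at this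
        have : f j (a + v) = f j a + f j v := by simp
        linarith [Set.mem_iInter₂.1 hvV j hj, this]
      · exact le_of_eq (hspanH j hw hxcl)
  -- ### Q ⊆ iriSet P
  have hQ_iri : Q ⊆ iriSet P := by
    rintro a ⟨haP, ha⟩
    refine ⟨haP, ?_⟩
    refine ⟨L.direction ⊓ ⨅ i ∈ Finset.univ.filter (fun i => ¬ ∃ xh ∈ P, f i xh < α i),
      LinearMap.ker ((f i) : X →ₗ[ℝ] ℝ), ?_⟩
    ext v
    simp only [SetLike.mem_coe, Submodule.mem_inf, Submodule.mem_iInf, LinearMap.mem_ker,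
      ContinuousLinearMap.coe_coe, Finset.mem_filter, Finset.mem_univ, true_and]
    constructor
    · rintro ⟨hvL, hvK⟩
      set Ifin : Finset (Fin m) := Finset.univ.filter (fun i => ∃ xh ∈ P, f i xh < α i) with hIfin
      have hU : (⋂ i ∈ Ifin, {t : ℝ | t * f i v < α i - f i a}) ∈ nhds (0:ℝ) := by
        apply (Filter.biInter_finset_mem _).2
        intro i hi
        have hWi : ∃ xh ∈ P, f i xh < α i := (Finset.mem_filter.1 hi).2
        have hopen : IsOpen {t : ℝ | t * f i v < α i - f i a} :=
          isOpen_lt (continuous_id.mul continuous_const) continuous_const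
        apply hopen.mem_nhds
        simp only [Set.mem_setOf_eq, zero_mul]
        linarith [ha i hWi]
      obtain ⟨ε, hε, hball⟩ := Metric.mem_nhds_iff.1 hU
      set t : ℝ := ε/2 with ht_def
      have ht : 0 < t := by positivity
      have htU : ∀ i ∈ Ifin, t * f i v < α i - f i a := by
        intro i hi
        have : t ∈ ⋂ i ∈ Ifin, {t : ℝ | t * f i v < α i - f i a} := by
          apply hball
          simp only [Metric.mem_ball, Real.dist_eq, sub_zero]
          rw [abs_of_pos ht]; simp [ht_def]; linarith
        exact Set.mem_iInter₂.1 this i hi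
      have hpP : a + t • v ∈ P := by
        refine (hPmem _).2 ⟨?_, ?_⟩
        · have := AffineSubspace.vadd_mem_of_mem_direction
            (L.direction.smul_mem t hvL) ((hPmem a).1 haP).1
          simpa [vadd_eq_add, add_comm] using this
        · intro j
          have hval : f j (a + t • v) = f j a + t * f j v := by simp
          by_cases hw : ∃ xh ∈ P, f j xh < α j
          · have hj : j ∈ Ifin := Finset.mem_filter.2 ⟨Finset.mem_univ j, hw⟩
            rw [hval]; linarith [htU j hj]
          · rw [hval, hvK j hw, mul_zero, add_zero]
            exact le_of_eq (hEq j hw a haP)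
      refine ⟨t⁻¹, le_of_lt (by positivity), t • v, ⟨a + t • v, hpP, by simp⟩, ?_⟩
      rw [smul_smul, inv_mul_cancel₀ (ne_of_gt ht), one_smul]
    · rintro ⟨c, hc, w, ⟨p, hpP, rfl⟩, rfl⟩
      constructor
      · have : p - a ∈ L.direction := by
          have := AffineSubspace.vsub_mem_direction ((hPmem p).1 hpP).1 ((hPmem a).1 haP).1
          simpa [vsub_eq_sub] using this
        exact L.direction.smul_mem c this
      · intro i hi
        have h1 : f i p = α i := hEq i hi p hpP
        have h2 : f i a = α i := hEq i hi a haP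
        simp [h1, h2]
  -- ### iriSet P ⊆ qriSet P
  have h_iri_qri : iriSet P ⊆ qriSet P := by
    rintro a ⟨haP, S, hS⟩
    exact ⟨haP, S.topologicalClosure, by rw [Submodule.topologicalClosure_coe, hS]⟩
  -- ### qriSet P ⊆ Q
  have hqri_Q : qriSet P ⊆ Q := by
    rintro a ⟨haP, S, hS⟩
    refine ⟨haP, ?_⟩
    intro i hw
    by_contra hlt
    have hai : f i a = α i := le_antisymm (((hPmem a).1 haP).2 i) (not_lt.1 hlt)
    have hcone : coneOf ((fun x => x - a) '' P) ⊆ (f i) ⁻¹' (Set.Iic 0) := by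
      rintro x ⟨c, hc, w, ⟨p, hpP, rfl⟩, rfl⟩
      have h1 : f i p ≤ α i := ((hPmem p).1 hpP).2 i
      simp only [Set.mem_preimage, map_smul, map_sub, Set.mem_Iic, smul_eq_mul]
      have : f i p - f i a ≤ 0 := by rw [hai]; linarith
      exact mul_nonpos_of_nonneg_of_nonpos hc this
    have hS' : (S : Set X) ⊆ (f i) ⁻¹' (Set.Iic 0) := by
      rw [hS]
      exact closure_minimal hcone (isClosed_Iic.preimage (f i).continuous)
    obtain ⟨z, hzP, hz⟩ := hw
    have hzS : z - a ∈ S := by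
      have : z - a ∈ (S : Set X) := by
        rw [hS]
        exact subset_closure ⟨1, zero_le_one, z - a, ⟨z, hzP, rfl⟩, (one_smul _ _).symm⟩
      exact this
    have hneg : -(z - a) ∈ S := S.neg_mem hzS
    have h1 : f i (-(z - a)) ≤ 0 := hS' hneg
    have h2 : f i (z - a) < 0 := by
      simp only [map_sub, hai]; linarith
    simp only [map_neg] at h1
    linarith
  -- ### assemble
  have hri_eq : riSet P = Q := Set.Subset.antisymm hri_sub hQ_ri
  refine ⟨hri_eq ▸ hQne, ?_, ?_, hri_eq⟩
  · apply Set.Subset.antisymm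
    · exact fun x hx => hri_eq ▸ (hqri_Q hx)
    · exact fun x hx => h_iri_qri (hQ_iri (hri_eq ▸ hx))
  · apply Set.Subset.antisymm
    · exact fun x hx => hri_eq ▸ (hqri_Q (h_iri_qri hx))
    · exact fun x hx => hQ_iri (hri_eq ▸ hx)
end
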